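/- Fundamental lemma for finite sums with correct domain: let a < b be integers and f : [a,b] ∩ ℤ → ℝ. If ∑_{t=a}^{b−1} f(t)·g(t+1) = 0 for every g : [a,b] ∩ ℤ → ℝ with g(a) = g(b) = 0, then f(t) = 0 for all t with a ≤ t ≤ b − 2; moreover f(b−1) need not vanish. -/

import Mathlib

/-- Discrete fundamental lemma with the correct domain: if
∑_{t=a}^{b−1} f(t)·g(t+1) = 0 for every g vanishing at a and b, then f = 0 on
[a, b−2]; moreover f(b−1) need not vanish. -/
theorem stmt16 (a b : ℤ) (hab : a < b) (f : ℤ → ℝ)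
    (hf : ∀ g : ℤ → ℝ, g a = 0 → g b = 0 →
      ∑ t ∈ Finset.Ico a b, f t * g (t + 1) = 0) :
    (∀ t : ℤ, a ≤ t → t ≤ b - 2 → f t = 0) ∧
    ∃ f' : ℤ → ℝ, f' (b - 1) ≠ 0 ∧
      ∀ g : ℤ → ℝ, g a = 0 → g b = 0 →
        ∑ t ∈ Finset.Ico a b, f' t * g (t + 1) = 0 := by
  constructor
  · intro t0 ht0a ht0b
    have h := hf (fun s => if s = t0 + 1 then 1 else 0)
      (by simp; omega) (by simp; omega)
    have heq : ∑ t ∈ Finset.Ico a b, f t * (if t + 1 = t0 + 1 then (1:ℝ) else 0)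
        = f t0 := by
      rw [Finset.sum_eq_single t0]
      · simp
      · intro t ht hne
        simp only [mul_ite, mul_one, mul_zero, ite_eq_right_iff]
        intro h; omega
      · intro h
        exfalso; apply h
        simp [Finset.mem_Ico]; omega
    simp only [heq] at h
    exact h
  · refine ⟨fun s => if s = b - 1 then 1 else 0, by simp, ?_⟩
    intro g ga gb
    rw [Finset.sum_eq_single (b - 1)]
    · simpa using gb
    · intro t ht hne; simp [hne]
    · intro h; exfalso; apply h; simp [Finset.mem_Ico]; omega
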